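/- For every positive integer n, the Wiener index d(SS_n) of the distributive lattice SS_n of lower sets of the shifted staircase poset S_n = {(i,j) : 1 ≤ i ≤ j ≤ n} satisfies 3 · d(SS_n) = 2n(2n + 1) · C(2n − 1, n), i.e., d(SS_n) = (2n(2n+1)/3) · binomial(2n − 1, n). -/

import Mathlib

/-- The Hasse diagram graph of a preorder: vertices are the elements, with an
edge between two elements exactly when one covers the other. -/
def hasseGraph (α : Type*) [Preorder α] : SimpleGraph α where
  Adj a b := a ⋖ b ∨ b ⋖ a
  symm := ⟨fun _ _ h => h.symm⟩
  loopless := ⟨fun _ h => h.elim (fun h' => h'.lt.ne rfl) (fun h' => h'.lt.ne rfl)⟩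

/-- The Wiener index of a poset: the sum over all ordered pairs of elements
of the graph distance in the Hasse diagram graph. -/
noncomputable def wienerIndex (α : Type*) [Preorder α] : ℕ :=
  ∑ᶠ p : α, ∑ᶠ q : α, (hasseGraph α).dist p q
/-- The shifted staircase poset $S_n = \{(i,j) : 1 ≤ i ≤ j ≤ n\}$ with
componentwise order. -/
abbrev Staircase (n : ℕ) : Type := {p : Fin n × Fin n // p.1 ≤ p.2}

namespace WS
open Finset

def T (u t : ℕ) : ℕ := ∑ k ∈ range (u+1), if t < k then u.choose k else 0
def D (u t : ℕ) : ℕ := ∑ k ∈ range (u+1), if k ≤ t then u.choose k else 0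
def V (u : ℕ) : ℕ := ∑ t ∈ range u, T u t * D u t
def Wf (n : ℕ) : ℕ := ∑ m ∈ range n, 4^m * V (n - m)

lemma T_add_D (u t : ℕ) : T u t + D u t = 2^u := by
  rw [T, D, ← sum_add_distrib, ← Nat.sum_range_choose u]
  refine sum_congr rfl fun k _ => ?_
  by_cases h : t < k
  · rw [if_pos h, if_neg (by omega), add_zero]
  · rw [if_neg h, if_pos (by omega), zero_add]

lemma T_succ (u t : ℕ) : T (u+1) t = 2 * T u t + u.choose t := by
  have hA : ∑ k ∈ range (u+1), (if t ≤ k then u.choose k else 0) = T u t + u.choose t := by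
    have e : ∀ k ∈ range (u+1), (if t ≤ k then u.choose k else 0)
        = (if t < k then u.choose k else 0) + (if k = t then u.choose k else 0) := by
      intro k _
      rcases lt_trichotomy t k with h | h | h
      · rw [if_pos h.le, if_pos h, if_neg (by omega), add_zero]
      · subst h; simp
      · rw [if_neg (by omega), if_neg (by omega), if_neg (by omega), add_zero]
    rw [sum_congr rfl e, sum_add_distrib]
    congr 1
    rw [sum_ite_eq' (range (u+1)) t (fun k => u.choose k)]
    by_cases h : t ∈ range (u+1)
    · rw [if_pos h]
    · rw [if_neg h, Nat.choose_eq_zero_of_lt (by simpa using h)]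
  have hB : ∑ k ∈ range (u+1), (if t ≤ k then u.choose (k+1) else 0) = T u t := by
    have h2 : ∑ k ∈ range (u+2), (if t < k then u.choose k else 0)
        = ∑ k ∈ range (u+1), (if t < k+1 then u.choose (k+1) else 0)
          + (if t < 0 then u.choose 0 else 0) := sum_range_succ' _ _
    rw [if_neg (by omega), add_zero] at h2
    have h3 : ∑ k ∈ range (u+2), (if t < k then u.choose k else 0) = T u t := by
      rw [sum_range_succ, Nat.choose_succ_self]
      simp [T]
    rw [← h3, h2]
    refine sum_congr rfl fun k _ => ?_
    by_cases h : t ≤ k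
    · rw [if_pos h, if_pos (by omega)]
    · rw [if_neg h, if_neg (by omega)]
  have key : T (u+1) t = ∑ k ∈ range (u+1), (if t ≤ k then u.choose k + u.choose (k+1) else 0) := by
    rw [T, sum_range_succ' (fun k => if t < k then (u+1).choose k else 0)]
    rw [if_neg (by omega), add_zero]
    refine sum_congr rfl fun k _ => ?_
    by_cases h : t ≤ k
    · rw [if_pos (by omega), if_pos h, Nat.choose_succ_succ]
    · rw [if_neg (by omega), if_neg h]
  have e2 : ∀ k ∈ range (u+1), (if t ≤ k then u.choose k + u.choose (k+1) else 0)
      = (if t ≤ k then u.choose k else 0) + (if t ≤ k then u.choose (k+1) else 0) := by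
    intro k _; split <;> simp
  rw [key, sum_congr rfl e2, sum_add_distrib, hA, hB]; ring

lemma D_succ (u t : ℕ) : D (u+1) t + u.choose t = 2 * D u t := by
  have h1 := T_add_D (u+1) t
  have h2 := T_add_D u t
  have h3 := T_succ u t
  have : (2:ℕ)^(u+1) = 2 * 2^u := by ring
  omega

lemma T_self (u : ℕ) : T u u = 0 := by
  refine sum_eq_zero fun k hk => ?_
  rw [if_neg (by simp at hk; omega)]

lemma sum_choose_sq (u : ℕ) : ∑ k ∈ range (u+1), u.choose k * u.choose k = (2*u).choose u := by
  have := Nat.add_choose_eq u u u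
  rw [Finset.Nat.sum_antidiagonal_eq_sum_range_succ_mk] at this
  rw [show 2*u = u + u by ring, this]
  refine sum_congr rfl fun k hk => ?_
  rw [Nat.choose_symm (by simp at hk; omega)]

lemma TC_CD (u : ℕ) :
    (∑ t ∈ range (u+1), u.choose t * T u t) + (∑ t ∈ range (u+1), u.choose t * D u t) = 4^u := by
  rw [← sum_add_distrib]
  have : ∀ t ∈ range (u+1), u.choose t * T u t + u.choose t * D u t = u.choose t * 2^u := by
    intro t _; rw [← mul_add, T_add_D]
  rw [sum_congr rfl this, ← sum_mul, Nat.sum_range_choose, show (4:ℕ)^u = 2^u*2^u by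
    rw [show (4:ℕ) = 2*2 by norm_num, mul_pow]]

lemma CD_eq (u : ℕ) :
    (∑ t ∈ range (u+1), u.choose t * D u t)
      = (∑ t ∈ range (u+1), u.choose t * T u t) + (2*u).choose u := by
  have expand : ∀ t ∈ range (u+1), u.choose t * D u t
      = (∑ k ∈ range (u+1), if k < t then u.choose t * u.choose k else 0)
        + u.choose t * u.choose t := by
    intro t ht
    rw [D, mul_sum]
    have e : ∀ k ∈ range (u+1), u.choose t * (if k ≤ t then u.choose k else 0)
        = (if k < t then u.choose t * u.choose k else 0)
          + (if k = t then u.choose t * u.choose k else 0) := by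
      intro k _
      rcases lt_trichotomy k t with h | h | h
      · rw [if_pos h.le, if_pos h, if_neg (by omega), add_zero]
      · subst h; simp
      · rw [if_neg (by omega), if_neg (by omega), if_neg (by omega), mul_zero, add_zero]
    rw [sum_congr rfl e, sum_add_distrib, sum_ite_eq' (range (u+1)) t]
    rw [if_pos ht]
  have expand2 : ∀ t ∈ range (u+1), u.choose t * T u t
      = ∑ k ∈ range (u+1), if t < k then u.choose t * u.choose k else 0 := by
    intro t _
    rw [T, mul_sum]
    refine sum_congr rfl fun k _ => ?_
    split <;> simp
  rw [sum_congr rfl expand, sum_congr rfl expand2, sum_add_distrib, sum_choose_sq]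
  congr 1
  rw [sum_comm]
  refine sum_congr rfl fun t _ => sum_congr rfl fun k _ => ?_
  by_cases h : t < k
  · rw [if_pos h, if_pos h, mul_comm]
  · rw [if_neg h, if_neg h]

lemma V_succ (u : ℕ) : V (u+1) = 4 * V u + (2*u).choose u := by
  have per : ∀ t, T (u+1) t * D (u+1) t + (2 * (u.choose t * T u t) + u.choose t * u.choose t)
      = 4 * (T u t * D u t) + 2 * (u.choose t * D u t) := by
    intro t
    have h1 := T_succ u t
    have h2 := D_succ u t
    nlinarith [h1, h2]
  have hsum : V (u+1) + (2 * (∑ t ∈ range (u+1), u.choose t * T u t)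
        + ∑ t ∈ range (u+1), u.choose t * u.choose t)
      = 4 * (∑ t ∈ range (u+1), T u t * D u t)
        + 2 * (∑ t ∈ range (u+1), u.choose t * D u t) := by
    rw [V, mul_sum, mul_sum, mul_sum, ← sum_add_distrib, ← sum_add_distrib, ← sum_add_distrib]
    exact sum_congr rfl fun t _ => per t
  have hTD : ∑ t ∈ range (u+1), T u t * D u t = V u := by
    rw [sum_range_succ, T_self, zero_mul, add_zero, V]
  rw [hTD, sum_choose_sq] at hsum
  have hcd := CD_eq u
  have htc := TC_CD u
  omega

lemma V_eq (u : ℕ) : V u = u * (2*u-1).choose u := by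
  induction u with
  | zero => simp [V]
  | succ u ih =>
    rw [V_succ, ih]
    have H1 : (u+1) * (2*u+1).choose (u+1) = (2*u+1) * (2*u).choose u := by
      have := Nat.add_one_mul_choose_eq (2*u) u
      rw [this]; ring
    have H2 : 2 * (u * (2*u-1).choose u) = u * (2*u).choose u := by
      cases u with
      | zero => simp
      | succ v =>
        have hs : (2*(v+1)).choose (v+1) = (2*v+1).choose v + (2*v+1).choose (v+1) := by
          rw [show 2*(v+1) = (2*v+1)+1 by ring]
          exact Nat.choose_succ_succ _ _
        have hsym : (2*v+1).choose v = (2*v+1).choose (v+1) := by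
          have := Nat.choose_symm (n := 2*v+1) (k := v+1) (by omega)
          rw [show 2*v+1-(v+1) = v by omega] at this
          omega
        have : (2*(v+1)-1) = 2*v+1 := by omega
        rw [this]
        nlinarith [hs, hsym]
    have goal_eq : (2*(u+1)-1) = 2*u+1 := by omega
    rw [goal_eq]
    nlinarith [H1, H2]

lemma Wf_succ (n : ℕ) : Wf (n+1) = 4 * Wf n + V (n+1) := by
  rw [Wf, sum_range_succ' (fun m => 4^m * V (n+1-m))]
  simp only [pow_zero, one_mul, Nat.sub_zero]
  rw [Wf, mul_sum]
  congr 1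
  refine sum_congr rfl fun m _ => ?_
  rw [show n+1-(m+1) = n-m by omega, pow_succ]
  ring

lemma main_arith (n : ℕ) : 6 * Wf n = 2*n*(2*n+1) * (2*n-1).choose n := by
  induction n with
  | zero => simp [Wf]
  | succ n ih =>
    rw [Wf_succ, V_eq]
    have H1 : (n+1) * (2*(n+1)-1).choose (n+1) = (2*n+1) * (2*n).choose n := by
      have := Nat.add_one_mul_choose_eq (2*n) n
      rw [show 2*(n+1)-1 = 2*n+1 by omega, this]; ring
    have H2 : 2 * (n * (2*n-1).choose n) = n * (2*n).choose n := by
      cases n with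
      | zero => simp
      | succ v =>
        have hs : (2*(v+1)).choose (v+1) = (2*v+1).choose v + (2*v+1).choose (v+1) := by
          rw [show 2*(v+1) = (2*v+1)+1 by ring]
          exact Nat.choose_succ_succ _ _
        have hsym : (2*v+1).choose v = (2*v+1).choose (v+1) := by
          have := Nat.choose_symm (n := 2*v+1) (k := v+1) (by omega)
          rw [show 2*v+1-(v+1) = v by omega] at this
          omega
        rw [show (2*(v+1)-1) = 2*v+1 by omega]
        nlinarith [hs, hsym]
    -- goal : 6 * (4 * Wf n + (n+1) * (2*(n+1)-1).choose (n+1)) = 2*(n+1)*(2*(n+1)+1)*(2*(n+1)-1).choose (n+1)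
    have e1 : 6 * (4 * Wf n) = 4 * (2*n*(2*n+1) * (2*n-1).choose n) := by omega
    nlinarith [H1, H2, e1]


open Finset
open scoped Classical

set_option linter.unusedSectionVars false

variable {α : Type*} [PartialOrder α] [Fintype α]

noncomputable instance : Fintype (LowerSet α) :=
  Fintype.ofFinite _

noncomputable def sdc (A B : LowerSet α) : ℕ :=
  #(univ.filter fun x => (x ∈ A ∧ x ∉ B) ∨ (x ∈ B ∧ x ∉ A))

lemma sdc_comm (A B : LowerSet α) : sdc A B = sdc B A := by
  unfold sdc; congr 1; apply filter_congr; intro x _; constructor <;> (intro h; tauto)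

lemma sdc_self (A : LowerSet α) : sdc A A = 0 := by
  unfold sdc
  rw [card_eq_zero, filter_eq_empty_iff]
  intro x _; tauto

lemma sdc_eq_zero (A B : LowerSet α) (h : sdc A B = 0) : A = B := by
  rw [sdc, card_eq_zero, filter_eq_empty_iff] at h
  apply SetLike.ext
  intro x
  have := h (mem_univ x)
  tauto

lemma sdc_triangle (A B C : LowerSet α) : sdc A C ≤ sdc A B + sdc B C := by
  unfold sdc
  refine le_trans (card_le_card ?_) (card_union_le _ _)
  intro x hx
  simp only [mem_filter, mem_union, mem_univ, true_and] at *
  tauto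

def eraseL (A : LowerSet α) (x : α) (hmax : ∀ y ∈ A, ¬ x < y) : LowerSet α :=
  ⟨(A : Set α) \ {x}, by
    intro a b hba ha
    refine ⟨A.lower hba ha.1, ?_⟩
    intro hbx
    simp only [Set.mem_singleton_iff] at hbx
    subst hbx
    rcases eq_or_lt_of_le hba with h | h
    · exact ha.2 h.symm
    · exact hmax a ha.1 h⟩

lemma mem_eraseL {A : LowerSet α} {x : α} {h} {y : α} :
    y ∈ eraseL A x h ↔ y ∈ A ∧ y ≠ x := Iff.rfl

def insertL (A : LowerSet α) (x : α) (hlow : ∀ y, y < x → y ∈ A) : LowerSet α :=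
  ⟨insert x (A : Set α), by
    intro a b hba ha
    rcases ha with rfl | ha
    · rcases eq_or_lt_of_le hba with h | h
      · exact Or.inl h
      · exact Or.inr (hlow b h)
    · exact Or.inr (A.lower hba ha)⟩

lemma mem_insertL {A : LowerSet α} {x : α} {h} {y : α} :
    y ∈ insertL A x h ↔ y = x ∨ y ∈ A := Iff.rfl

lemma exists_mem_notmem {A B : LowerSet α} (h : A < B) : ∃ x, x ∈ B ∧ x ∉ A := by
  by_contra hcon
  push_neg at hcon
  exact absurd (le_antisymm h.le (show (B:Set α) ⊆ A from fun x hx => hcon x hx)) h.ne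

lemma old_exists_minimal {β : Type*} [PartialOrder β] (s : Finset β) (h : s.Nonempty) :
    ∃ m ∈ s, ∀ x ∈ s, ¬ x < m := by
  obtain ⟨z, hz⟩ := Finset.exists_minimal h
  exact ⟨z, hz.prop, fun y hy hlt => lt_irrefl z (lt_of_le_of_lt (hz.2 hy hlt.le) hlt)⟩

lemma old_exists_maximal {β : Type*} [PartialOrder β] (s : Finset β) (h : s.Nonempty) :
    ∃ m ∈ s, ∀ x ∈ s, ¬ m < x := by
  obtain ⟨z, hz⟩ := Finset.exists_maximal h
  exact ⟨z, hz.prop, fun y hy hlt => lt_irrefl z (lt_of_lt_of_le hlt (hz.2 hy hlt.le))⟩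

lemma cover_of_sdc_one {A B : LowerSet α} (hle : A ≤ B) (h1 : sdc A B = 1) : A ⋖ B := by
  rw [sdc, card_eq_one] at h1
  obtain ⟨x, hx⟩ := h1
  have hcond : ∀ y : α, ((y ∈ A ∧ y ∉ B) ∨ (y ∈ B ∧ y ∉ A)) ↔ y = x := by
    intro y
    constructor
    · intro hy
      have hmem : y ∈ univ.filter fun z => (z ∈ A ∧ z ∉ B) ∨ (z ∈ B ∧ z ∉ A) := by
        simp only [mem_filter, mem_univ, true_and]; exact hy
      rw [hx] at hmem; simpa using hmem
    · intro hy
      have hmem : x ∈ univ.filter fun z => (z ∈ A ∧ z ∉ B) ∨ (z ∈ B ∧ z ∉ A) := by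
        rw [hx]; simp
      rw [hy]
      simpa using hmem
  have hxB : x ∈ B ∧ x ∉ A := by
    rcases (hcond x).2 rfl with ⟨ha, hb⟩ | h
    · exact absurd (hle ha) hb
    · exact h
  constructor
  · refine lt_of_le_of_ne hle ?_
    intro h; rw [h] at hxB; exact hxB.2 hxB.1
  · intro C hAC hCB
    have hCle : C ≤ B := hCB.le
    obtain ⟨y, hyC, hyA⟩ := exists_mem_notmem hAC
    have hyx : y = x := (hcond y).1 (Or.inr ⟨hCle hyC, hyA⟩)
    have hBC : B ≤ C := by
      intro z hz
      by_cases hzA : z ∈ A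
      · exact hAC.le hzA
      · have hzx : z = x := (hcond z).1 (Or.inr ⟨hz, hzA⟩)
        rw [hzx, ← hyx]; exact hyC
    exact absurd (le_antisymm hCB.le hBC) hCB.ne

lemma sdc_of_cov {A B : LowerSet α} (h : A ⋖ B) : sdc A B = 1 := by
  have hle : A ≤ B := h.lt.le
  obtain ⟨x, hxB, hxA⟩ := exists_mem_notmem h.lt
  have hne : (univ.filter fun y => y ∈ B ∧ y ∉ A).Nonempty :=
    ⟨x, by simp [hxB, hxA]⟩
  obtain ⟨z, hzs, hmin⟩ := old_exists_minimal _ hne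
  simp only [mem_filter, mem_univ, true_and] at hzs
  have hlow : ∀ y, y < z → y ∈ A := by
    intro y hy
    by_contra hyA
    exact hmin y (mem_filter.2 ⟨mem_univ _, B.lower hy.le hzs.1, hyA⟩) hy
  set C := insertL A z hlow with hC
  have hAC : A < C := by
    refine lt_of_le_of_ne (show (A:Set α) ⊆ C from fun w hw => mem_insertL.2 (Or.inr hw)) ?_
    intro heq
    exact hzs.2 (heq ▸ mem_insertL.2 (Or.inl rfl))
  have hCB : C ≤ B := by
    intro w hw
    rcases mem_insertL.1 hw with rfl | hwA
    · exact hzs.1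
    · exact hle hwA
  have hCeqB : C = B := by
    by_contra hneq
    exact h.2 hAC (lt_of_le_of_ne hCB hneq)
  rw [sdc]
  have : (univ.filter fun y => (y ∈ A ∧ y ∉ B) ∨ (y ∈ B ∧ y ∉ A)) = {z} := by
    ext y
    simp only [mem_filter, mem_univ, true_and, mem_singleton]
    constructor
    · rintro (⟨h1, h2⟩ | ⟨h1, h2⟩)
      · exact absurd (hle h1) h2
      · rw [← hCeqB] at h1
        rcases mem_insertL.1 h1 with rfl | hA
        · rfl
        · exact absurd hA h2
    · rintro rfl
      exact Or.inr ⟨hzs.1, hzs.2⟩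
  rw [this, card_singleton]

lemma adj_sdc {A B : LowerSet α} (h : (hasseGraph (LowerSet α)).Adj A B) : sdc A B = 1 := by
  rcases (show A ⋖ B ∨ B ⋖ A from h) with h | h
  · exact sdc_of_cov h
  · rw [sdc_comm]; exact sdc_of_cov h

lemma walk_ge {A B : LowerSet α} (w : (hasseGraph (LowerSet α)).Walk A B) :
    sdc A B ≤ w.length := by
  induction w with
  | nil => rw [sdc_self]; exact Nat.zero_le _
  | @cons u v z h p ih =>
    calc sdc u z ≤ sdc u v + sdc v z := sdc_triangle _ _ _
    _ ≤ 1 + p.length := by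
        have := adj_sdc h
        omega
    _ = (SimpleGraph.Walk.cons h p).length := by
        rw [SimpleGraph.Walk.length_cons]; omega

lemma exists_walk : ∀ (k : ℕ) (A B : LowerSet α), sdc A B = k →
    ∃ w : (hasseGraph (LowerSet α)).Walk A B, w.length = k := by
  intro k
  induction k with
  | zero =>
    intro A B h
    have := sdc_eq_zero A B h
    subst this
    exact ⟨SimpleGraph.Walk.nil, rfl⟩
  | succ k ih =>
    intro A B h
    by_cases hcase : ∃ x, x ∈ A ∧ x ∉ B
    · -- remove a maximal element of A \ B
      have hne : (univ.filter fun y => y ∈ A ∧ y ∉ B).Nonempty := by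
        obtain ⟨x, hx⟩ := hcase
        exact ⟨x, by simp [hx.1, hx.2]⟩
      obtain ⟨z, hzs, hmax⟩ := old_exists_maximal _ hne
      simp only [mem_filter, mem_univ, true_and] at hzs
      have hmaxA : ∀ y ∈ A, ¬ z < y := by
        intro y hy hlt
        by_cases hyB : y ∈ B
        · exact hzs.2 (B.lower hlt.le hyB)
        · exact hmax y (by simp [hy, hyB]) hlt
      set A' := eraseL A z hmaxA with hA'
      have hzA' : z ∉ A' := fun hc => (mem_eraseL.1 hc).2 rfl
      have hA'le : A' ≤ A := fun w hw => (mem_eraseL.1 hw).1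
      have hfil : (univ.filter fun y => (y ∈ A' ∧ y ∉ B) ∨ (y ∈ B ∧ y ∉ A'))
          = (univ.filter fun y => (y ∈ A ∧ y ∉ B) ∨ (y ∈ B ∧ y ∉ A)).erase z := by
        ext y
        simp only [mem_erase, mem_filter, mem_univ, true_and]
        by_cases hyz : y = z
        · subst hyz
          constructor
          · rintro (⟨h1, _⟩ | ⟨h1, h2⟩)
            · exact absurd rfl (mem_eraseL.1 h1).2
            · exact absurd h1 hzs.2
          · rintro ⟨hc, _⟩; exact absurd rfl hc
        · have hmem : y ∈ A' ↔ y ∈ A := by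
            rw [mem_eraseL]
            exact ⟨fun h => h.1, fun h => ⟨h, hyz⟩⟩
          tauto
      have hzfil : z ∈ univ.filter fun y => (y ∈ A ∧ y ∉ B) ∨ (y ∈ B ∧ y ∉ A) := by
        simp only [mem_filter, mem_univ, true_and]
        exact Or.inl ⟨hzs.1, hzs.2⟩
      have hsdc' : sdc A' B = k := by
        unfold sdc at h ⊢
        rw [hfil, card_erase_of_mem hzfil, h]
        omega
      have hcov : A' ⋖ A := by
        apply cover_of_sdc_one hA'le
        have hsing : (univ.filter fun y => (y ∈ A' ∧ y ∉ A) ∨ (y ∈ A ∧ y ∉ A')) = {z} := by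
          ext y
          simp only [mem_filter, mem_univ, true_and, mem_singleton]
          constructor
          · rintro (⟨h1, h2⟩ | ⟨h1, h2⟩)
            · exact absurd (hA'le h1) h2
            · by_contra hyz
              exact h2 (mem_eraseL.2 ⟨h1, hyz⟩)
          · rintro rfl
            exact Or.inr ⟨hzs.1, hzA'⟩
        unfold sdc
        rw [hsing, card_singleton]
      obtain ⟨w', hw'⟩ := ih A' B hsdc'
      exact ⟨SimpleGraph.Walk.cons (show (hasseGraph (LowerSet α)).Adj A A' from Or.inr hcov) w', by
        rw [SimpleGraph.Walk.length_cons, hw']⟩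
    · push_neg at hcase
      have hle : A ≤ B := show (A:Set α) ⊆ B from fun x hx => hcase x hx
      have hAB : A < B := by
        refine lt_of_le_of_ne hle ?_
        intro heq
        subst heq
        rw [sdc_self] at h
        omega
      obtain ⟨x0, hx0⟩ := exists_mem_notmem hAB
      have hne : (univ.filter fun y => y ∈ B ∧ y ∉ A).Nonempty :=
        ⟨x0, by simp [hx0.1, hx0.2]⟩
      obtain ⟨z, hzs, hmin⟩ := old_exists_minimal _ hne
      simp only [mem_filter, mem_univ, true_and] at hzs
      have hlow : ∀ y, y < z → y ∈ A := by
        intro y hy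
        by_contra hyA
        exact hmin y (mem_filter.2 ⟨mem_univ _, B.lower hy.le hzs.1, hyA⟩) hy
      set C := insertL A z hlow with hCdef
      have hzC : z ∈ C := mem_insertL.2 (Or.inl rfl)
      have hAC : A ≤ C := show (A:Set α) ⊆ C from fun w hw => mem_insertL.2 (Or.inr hw)
      have hCB : C ≤ B := by
        intro w hw
        rcases mem_insertL.1 hw with rfl | hwA
        · exact hzs.1
        · exact hle hwA
      have hfil : (univ.filter fun y => (y ∈ C ∧ y ∉ B) ∨ (y ∈ B ∧ y ∉ C))
          = (univ.filter fun y => (y ∈ A ∧ y ∉ B) ∨ (y ∈ B ∧ y ∉ A)).erase z := by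
        ext y
        simp only [mem_erase, mem_filter, mem_univ, true_and]
        by_cases hyz : y = z
        · subst hyz
          constructor
          · rintro (⟨h1, h2⟩ | ⟨h1, h2⟩)
            · exact absurd hzs.1 h2
            · exact absurd hzC h2
          · rintro ⟨hc, _⟩
            exact absurd rfl hc
        · have hmem : y ∈ C ↔ y ∈ A := by
            rw [hCdef, mem_insertL]
            exact ⟨fun h' => h'.resolve_left hyz, fun h' => Or.inr h'⟩
          tauto
      have hzfil : z ∈ univ.filter fun y => (y ∈ A ∧ y ∉ B) ∨ (y ∈ B ∧ y ∉ A) := by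
        simp only [mem_filter, mem_univ, true_and]
        exact Or.inr ⟨hzs.1, hzs.2⟩
      have hsdc' : sdc C B = k := by
        unfold sdc at h ⊢
        rw [hfil, card_erase_of_mem hzfil, h]
        omega
      have hcov : A ⋖ C := by
        apply cover_of_sdc_one hAC
        have hsing : (univ.filter fun y => (y ∈ A ∧ y ∉ C) ∨ (y ∈ C ∧ y ∉ A)) = {z} := by
          ext y
          simp only [mem_filter, mem_univ, true_and, mem_singleton]
          constructor
          · rintro (⟨h1, h2⟩ | ⟨h1, h2⟩)
            · exact absurd (hAC h1) h2
            · exact (mem_insertL.1 h1).resolve_right h2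
          · rintro rfl
            exact Or.inr ⟨hzC, hzs.2⟩
        unfold sdc
        rw [hsing, card_singleton]
      obtain ⟨w', hw'⟩ := ih C B hsdc'
      exact ⟨SimpleGraph.Walk.cons (show (hasseGraph (LowerSet α)).Adj A C from Or.inl hcov) w', by
        rw [SimpleGraph.Walk.length_cons, hw']⟩

lemma dist_eq (A B : LowerSet α) : (hasseGraph (LowerSet α)).dist A B = sdc A B := by
  obtain ⟨w, hw⟩ := exists_walk (sdc A B) A B rfl
  have hreach : (hasseGraph (LowerSet α)).Reachable A B := ⟨w⟩
  refine le_antisymm (le_trans (SimpleGraph.dist_le w) (le_of_eq hw)) ?_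
  obtain ⟨p, hp⟩ := hreach.exists_walk_length_eq_dist
  calc sdc A B ≤ p.length := walk_ge p
  _ = _ := hp


open Finset

variable {n : ℕ}

def cnt (S : Finset (Fin n)) (m : ℕ) : ℕ := #(S.filter fun s : Fin n => m ≤ (s:ℕ))

lemma cnt_antitone (S : Finset (Fin n)) {a b : ℕ} (h : a ≤ b) : cnt S b ≤ cnt S a := by
  apply card_le_card
  intro x hx
  rw [mem_filter] at *
  exact ⟨hx.1, le_trans h hx.2⟩

lemma card_val_range (S : Finset (Fin n)) (a b : ℕ) :
    #(S.filter fun s : Fin n => a ≤ (s:ℕ) ∧ (s:ℕ) < b) ≤ b - a := by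
  calc #(S.filter fun s : Fin n => a ≤ (s:ℕ) ∧ (s:ℕ) < b) ≤ #(Finset.Ico a b) := by
        refine card_le_card_of_injOn (fun s : Fin n => (s:ℕ)) ?_ ?_
        · intro s hs
          rw [mem_coe, mem_filter] at hs
          rw [mem_coe, Finset.mem_Ico]
          exact hs.2
        · exact fun x _ y _ h => Fin.val_injective h
  _ = b - a := Nat.card_Ico a b

lemma cnt_le_add (S : Finset (Fin n)) (a b : ℕ) : cnt S b ≤ cnt S a + (a - b) := by
  by_cases h : a ≤ b
  · exact le_trans (cnt_antitone S h) (Nat.le_add_right _ _)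
  · push_neg at h
    have hsub : S.filter (fun s : Fin n => b ≤ (s:ℕ))
        ⊆ S.filter (fun s : Fin n => a ≤ (s:ℕ)) ∪ S.filter (fun s : Fin n => b ≤ (s:ℕ) ∧ (s:ℕ) < a) := by
      intro x hx
      rw [mem_filter] at hx
      rw [mem_union, mem_filter, mem_filter]
      by_cases hxa : a ≤ (x:ℕ)
      · exact Or.inl ⟨hx.1, hxa⟩
      · exact Or.inr ⟨hx.1, hx.2, by omega⟩
    calc cnt S b ≤ _ := card_le_card hsub
    _ ≤ _ := card_union_le _ _
    _ ≤ cnt S a + (a - b) := by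
        have := card_val_range S b a
        unfold cnt
        omega

lemma cnt_le (S : Finset (Fin n)) (m : ℕ) : cnt S m ≤ n - m := by
  calc cnt S m ≤ #(S.filter fun s : Fin n => m ≤ (s:ℕ) ∧ (s:ℕ) < n) := by
        apply card_le_card
        intro x hx
        rw [mem_filter] at *
        exact ⟨hx.1, hx.2, x.isLt⟩
  _ ≤ n - m := card_val_range S m n

lemma cnt_zero (S : Finset (Fin n)) {m : ℕ} (h : n ≤ m) : cnt S m = 0 := by
  have := cnt_le S m
  omega

lemma cnt_succ (S : Finset (Fin n)) (v : Fin n) :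
    cnt S (v:ℕ) = cnt S ((v:ℕ)+1) + (if v ∈ S then 1 else 0) := by
  unfold cnt
  have hsplit : S.filter (fun s : Fin n => (v:ℕ) ≤ (s:ℕ))
      = S.filter (fun s : Fin n => (v:ℕ)+1 ≤ (s:ℕ)) ∪ S.filter (fun s : Fin n => s = v) := by
    ext s
    simp only [mem_union, mem_filter]
    constructor
    · rintro ⟨hs, hv⟩
      by_cases heq : (s:ℕ) = (v:ℕ)
      · exact Or.inr ⟨hs, Fin.val_injective heq⟩
      · exact Or.inl ⟨hs, by omega⟩
    · rintro (⟨hs, hv⟩ | ⟨hs, rfl⟩)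
      · exact ⟨hs, by omega⟩
      · exact ⟨hs, le_refl _⟩
  rw [hsplit, card_union_of_disjoint]
  · congr 1
    rw [filter_eq']
    by_cases hv : v ∈ S <;> simp [hv]
  · rw [disjoint_left]
    intro s hs1 hs2
    rw [mem_filter] at hs1 hs2
    rw [hs2.2] at hs1
    omega

lemma cnt_ext {S S' : Finset (Fin n)} (h : ∀ m, cnt S m = cnt S' m) : S = S' := by
  ext s
  have h1 := cnt_succ S s
  have h2 := cnt_succ S' s
  have e1 := h (s:ℕ)
  have e2 := h ((s:ℕ)+1)
  by_cases hs : s ∈ S <;> by_cases hs' : s ∈ S' <;>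
    simp only [hs, hs', if_true, if_false] at h1 h2 <;> simp [hs, hs'] <;> omega

lemma stair_le {x y : Staircase n} :
    x ≤ y ↔ (x.1.1:ℕ) ≤ (y.1.1:ℕ) ∧ (x.1.2:ℕ) ≤ (y.1.2:ℕ) := by
  rw [← Subtype.coe_le_coe, Prod.le_def, Fin.le_def, Fin.le_def]

lemma stair_prop (x : Staircase n) : (x.1.1:ℕ) ≤ (x.1.2:ℕ) := Fin.le_def.1 x.2

def idl (S : Finset (Fin n)) : LowerSet (Staircase n) :=
  ⟨{x | (x.1.1:ℕ) < cnt S ((x.1.2:ℕ) - (x.1.1:ℕ))}, by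
    intro a b hba ha
    simp only [Set.mem_setOf_eq] at *
    obtain ⟨h1, h2⟩ := stair_le.1 hba
    have hb := stair_prop b
    have ha2 := stair_prop a
    have key := cnt_le_add S ((b.1.2:ℕ) - (b.1.1:ℕ)) ((a.1.2:ℕ) - (a.1.1:ℕ))
    omega⟩

lemma mem_idl {S : Finset (Fin n)} {x : Staircase n} :
    x ∈ idl S ↔ (x.1.1:ℕ) < cnt S ((x.1.2:ℕ) - (x.1.1:ℕ)) := Iff.rfl

lemma idl_cnt_le {S S' : Finset (Fin n)} (h : idl S = idl S') (m : ℕ) :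
    cnt S m ≤ cnt S' m := by
  by_contra hc
  push_neg at hc
  have hmn : m < n := by
    by_contra hmn
    push_neg at hmn
    rw [cnt_zero S hmn] at hc
    omega
  have hle := cnt_le S m
  set i := cnt S' m with hi
  have him : i + m < n := by omega
  set x : Staircase n := ⟨(⟨i, by omega⟩, ⟨i + m, him⟩), by
    rw [Fin.le_def]; exact Nat.le_add_right _ _⟩ with hx
  have hmem : x ∈ idl S := by
    rw [mem_idl]
    show i < cnt S ((i + m) - i)
    rw [Nat.add_sub_cancel_left]
    omega
  rw [h] at hmem
  rw [mem_idl] at hmem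
  have : i < cnt S' ((i + m) - i) := hmem
  rw [Nat.add_sub_cancel_left] at this
  omega

lemma idl_inj : Function.Injective (idl (n := n)) := fun S S' h =>
  cnt_ext fun m => le_antisymm (idl_cnt_le h m) (idl_cnt_le h.symm m)

open scoped Classical in
noncomputable def rowlen (A : LowerSet (Staircase n)) (i : Fin n) : ℕ :=
  #(univ.filter fun j : Fin n => ∃ h : i ≤ j, (⟨(i, j), h⟩ : Staircase n) ∈ A)

open scoped Classical

lemma mem_iff_rowlen (A : LowerSet (Staircase n)) (x : Staircase n) :
    x ∈ A ↔ (x.1.2:ℕ) < (x.1.1:ℕ) + rowlen A x.1.1 := by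
  obtain ⟨⟨i, j⟩, hij⟩ := x
  simp only
  have hij' : (i:ℕ) ≤ (j:ℕ) := Fin.le_def.1 hij
  constructor
  · intro hx
    have hsub : Finset.Icc i j
        ⊆ univ.filter fun j' : Fin n => ∃ h : i ≤ j', (⟨(i, j'), h⟩ : Staircase n) ∈ A := by
      intro j' hj'
      rw [mem_Icc] at hj'
      refine mem_filter.2 ⟨mem_univ _, hj'.1, ?_⟩
      refine A.lower ?_ hx
      exact stair_le.2 ⟨le_refl _, Fin.le_def.1 hj'.2⟩
    have hcard := card_le_card hsub
    rw [Fin.card_Icc] at hcard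
    unfold rowlen
    omega
  · intro hlen
    by_contra hx
    have hsub : (univ.filter fun j' : Fin n => ∃ h : i ≤ j', (⟨(i, j'), h⟩ : Staircase n) ∈ A)
        ⊆ Finset.Ico i j := by
      intro j' hj'
      obtain ⟨hle', hmem⟩ := (mem_filter.1 hj').2
      rw [mem_Ico]
      refine ⟨hle', ?_⟩
      rw [Fin.lt_def]
      by_contra hjj
      push_neg at hjj
      exact hx (A.lower (show (⟨(i,j),hij⟩:Staircase n) ≤ ⟨(i,j'),hle'⟩ from
        stair_le.2 ⟨le_refl _, hjj⟩) hmem)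
    have hcard := card_le_card hsub
    rw [Fin.card_Ico] at hcard
    unfold rowlen at hlen
    omega

lemma rowlen_le (A : LowerSet (Staircase n)) (i : Fin n) : rowlen A i ≤ n - (i:ℕ) := by
  unfold rowlen
  calc _ ≤ #(Finset.Ici i) := by
        apply card_le_card
        intro j hj
        obtain ⟨hle, _⟩ := (mem_filter.1 hj).2
        exact Finset.mem_Ici.2 hle
  _ = n - (i:ℕ) := Fin.card_Ici i

lemma rowlen_strict (A : LowerSet (Staircase n)) {i i' : Fin n} (hii : i ≤ i')
    (hpos : 0 < rowlen A i') :
    rowlen A i' + ((i':ℕ) - (i:ℕ)) ≤ rowlen A i := by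
  have hii' : (i:ℕ) ≤ (i':ℕ) := Fin.le_def.1 hii
  set ℓ := rowlen A i' with hℓ
  have hb : ℓ ≤ n - (i':ℕ) := rowlen_le A i'
  have hlt : (i':ℕ) + ℓ - 1 < n := by omega
  set j0 : Fin n := ⟨(i':ℕ) + ℓ - 1, hlt⟩ with hj0
  have hx' : (⟨(i', j0), by rw [Fin.le_def]; show (i':ℕ) ≤ (i':ℕ) + ℓ - 1; omega⟩
      : Staircase n) ∈ A := by
    rw [mem_iff_rowlen]
    show ((i':ℕ) + ℓ - 1) < (i':ℕ) + rowlen A i'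
    omega
  have hy : (⟨(i, j0), by rw [Fin.le_def]; show (i:ℕ) ≤ (i':ℕ) + ℓ - 1; omega⟩
      : Staircase n) ∈ A := by
    refine A.lower ?_ hx'
    exact stair_le.2 ⟨hii', le_refl _⟩
  have := (mem_iff_rowlen A _).1 hy
  have h2 : ((i':ℕ) + ℓ - 1) < (i:ℕ) + rowlen A i := this
  omega

noncomputable def Sof (A : LowerSet (Staircase n)) : Finset (Fin n) :=
  univ.filter fun s : Fin n => ∃ i, rowlen A i = (s:ℕ) + 1

lemma key_cnt (A : LowerSet (Staircase n)) (m : ℕ) :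
    cnt (Sof A) m = #(univ.filter fun i : Fin n => m + 1 ≤ rowlen A i) := by
  have hRL : ∀ i : Fin n, m + 1 ≤ rowlen A i → rowlen A i - 1 < n := by
    intro i h
    have := rowlen_le A i
    omega
  unfold cnt Sof
  rw [filter_filter]
  symm
  apply card_bij (fun i hi => (⟨rowlen A i - 1,
    hRL i (by exact (mem_filter.1 hi).2)⟩ : Fin n))
  · intro i hi
    have hm := (mem_filter.1 hi).2
    rw [mem_filter]
    refine ⟨mem_univ _, ⟨i, ?_⟩, ?_⟩
    · show rowlen A i = (rowlen A i - 1) + 1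
      omega
    · show m ≤ rowlen A i - 1
      omega
  · intro i1 hi1 i2 hi2 heq
    have h1 := (mem_filter.1 hi1).2
    have h2 := (mem_filter.1 hi2).2
    have hval : rowlen A i1 - 1 = rowlen A i2 - 1 := congrArg Fin.val heq
    have heqr : rowlen A i1 = rowlen A i2 := by omega
    by_contra hne
    rcases Ne.lt_or_gt hne with hlt | hlt
    · have := rowlen_strict A (le_of_lt hlt) (by omega)
      have := Fin.lt_def.1 hlt
      omega
    · have := rowlen_strict A (le_of_lt hlt) (by omega)
      have := Fin.lt_def.1 hlt
      omega
  · intro b hb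
    rw [mem_filter] at hb
    obtain ⟨-, ⟨i, hieq⟩, hm⟩ := hb
    refine ⟨i, mem_filter.2 ⟨mem_univ _, by omega⟩, ?_⟩
    apply Fin.val_injective
    show rowlen A i - 1 = (b:ℕ)
    omega

lemma idl_Sof (A : LowerSet (Staircase n)) : idl (Sof A) = A := by
  apply SetLike.ext
  intro x
  rw [mem_idl, mem_iff_rowlen, key_cnt]
  have hij : (x.1.1:ℕ) ≤ (x.1.2:ℕ) := stair_prop x
  set i := x.1.1 with hidef
  set j := x.1.2 with hjdef
  set m := (j:ℕ) - (i:ℕ) with hm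
  constructor
  · intro hcnt
    by_contra hrow
    push_neg at hrow
    have hsub : (univ.filter fun i' : Fin n => m + 1 ≤ rowlen A i') ⊆ Finset.Iio i := by
      intro i' hi'
      have h2 := (mem_filter.1 hi').2
      rw [Finset.mem_Iio, Fin.lt_def]
      by_contra hge
      push_neg at hge
      have hge' : i ≤ i' := Fin.le_def.2 hge
      have := rowlen_strict A hge' (by omega)
      omega
    have := card_le_card hsub
    rw [Fin.card_Iio] at this
    omega
  · intro hrow
    have hsub : Finset.Iic i ⊆ univ.filter fun i' : Fin n => m + 1 ≤ rowlen A i' := by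
      intro i' hi'
      rw [Finset.mem_Iic] at hi'
      refine mem_filter.2 ⟨mem_univ _, ?_⟩
      have hle' : (i':ℕ) ≤ (i:ℕ) := Fin.le_def.1 hi'
      have := rowlen_strict A hi' (by omega)
      omega
    have := card_le_card hsub
    rw [Fin.card_Iic] at this
    omega

lemma idl_bij : Function.Bijective (idl (n := n)) :=
  ⟨idl_inj, fun A => ⟨Sof A, idl_Sof A⟩⟩




lemma card_lowvals (m : ℕ) (hm : m ≤ n) :
    #(univ.filter fun s : Fin n => ¬ m ≤ (s:ℕ)) = m := by
  have key : #(univ.filter fun s : Fin n => ¬ m ≤ (s:ℕ)) = #(range m) := by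
    apply card_bij (fun (s : Fin n) _ => (s:ℕ))
    · intro s hs
      have := (mem_filter.1 hs).2
      exact mem_range.2 (by omega)
    · intro a1 h1 a2 h2 heq
      exact Fin.val_injective heq
    · intro b hb
      have hbm := mem_range.1 hb
      refine ⟨⟨b, by omega⟩, mem_filter.2 ⟨mem_univ _, by simp; omega⟩, rfl⟩
  rw [key, card_range]

lemma card_highvals (m : ℕ) (hm : m ≤ n) :
    #(univ.filter fun s : Fin n => m ≤ (s:ℕ)) = n - m := by
  have h := card_filter_add_card_filter_not
    (s := (univ : Finset (Fin n))) (p := fun s : Fin n => m ≤ (s:ℕ))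
  have h2 := card_lowvals (n := n) m hm
  have h3 : #(univ : Finset (Fin n)) = n := by
    rw [card_univ, Fintype.card_fin]
  omega

lemma count_filter_eq (m : ℕ) (hm : m ≤ n) (t : Finset (Fin n)) (ht : ∀ x ∈ t, m ≤ (x:ℕ)) :
    #(univ.filter fun S : Finset (Fin n) => S.filter (fun s : Fin n => m ≤ (s:ℕ)) = t) = 2 ^ m := by
  have h1 : #((univ.filter fun s : Fin n => ¬ m ≤ (s:ℕ)).powerset) = 2 ^ m := by
    rw [card_powerset, card_lowvals m hm]
  rw [← h1]
  apply card_nbij' (i := fun S => S.filter fun s : Fin n => ¬ m ≤ (s:ℕ)) (j := fun R => t ∪ R)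
  · intro S _
    rw [mem_coe, mem_powerset]
    exact filter_subset_filter _ (subset_univ S)
  · intro R hR
    rw [mem_coe, mem_powerset] at hR
    rw [mem_coe, mem_filter]
    refine ⟨mem_univ _, ?_⟩
    have h1 : t.filter (fun s : Fin n => m ≤ (s:ℕ)) = t := filter_true_of_mem ht
    have h2 : R.filter (fun s : Fin n => m ≤ (s:ℕ)) = ∅ :=
      filter_false_of_mem (fun x hx => (mem_filter.1 (hR hx)).2)
    rw [filter_union, h1, h2, union_empty]
  · intro S hS
    have hSt := (mem_filter.1 hS).2
    dsimp only
    rw [← hSt, filter_union_filter_not_eq]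
  · intro R hR
    rw [mem_coe, mem_powerset] at hR
    have h1 : t.filter (fun s : Fin n => ¬ m ≤ (s:ℕ)) = ∅ :=
      filter_false_of_mem (fun x hx hc => hc (ht x hx))
    have h2 : R.filter (fun s : Fin n => ¬ m ≤ (s:ℕ)) = R :=
      filter_true_of_mem (fun x hx => (mem_filter.1 (hR hx)).2)
    dsimp only
    rw [filter_union, h1, h2, empty_union]

lemma card_powerset_filter (U : Finset (Fin n)) (i : ℕ) :
    #(U.powerset.filter fun t => i < #t) = T #U i := by
  rw [card_eq_sum_card_fiberwise (f := fun t : Finset (Fin n) => #t) (t := range (#U + 1))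
    (fun t ht => mem_range.2 (by
      show #t < #U + 1
      have := card_le_card (mem_powerset.1 (mem_filter.1 ht).1)
      omega))]
  refine sum_congr rfl fun k hk => ?_
  rw [filter_filter]
  by_cases hik : i < k
  · rw [if_pos hik]
    have he : U.powerset.filter (fun t => i < #t ∧ #t = k)
        = U.powerset.filter (fun t => #t = k) := by
      apply filter_congr
      intro t _
      exact ⟨fun h => h.2, fun h => ⟨by omega, h⟩⟩
    rw [he, ← powersetCard_eq_filter, card_powersetCard]
  · rw [if_neg hik, card_eq_zero, filter_eq_empty_iff]
    rintro t _ ⟨h1, h2⟩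
    omega

lemma count_cnt (m i : ℕ) (hm : m ≤ n) :
    #(univ.filter fun S : Finset (Fin n) => i < cnt S m) = 2 ^ m * T (n - m) i := by
  have hU := card_highvals (n := n) m hm
  rw [card_eq_sum_card_fiberwise
    (f := fun S : Finset (Fin n) => S.filter fun s : Fin n => m ≤ (s:ℕ))
    (t := (univ.filter fun s : Fin n => m ≤ (s:ℕ)).powerset.filter fun t => i < #t)
    (fun S hS => by
      rw [mem_coe, mem_filter, mem_powerset]
      exact ⟨filter_subset_filter _ (subset_univ S), (mem_filter.1 hS).2⟩)]
  have hterm : ∀ t ∈ (univ.filter fun s : Fin n => m ≤ (s:ℕ)).powerset.filter fun t => i < #t,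
      #((univ.filter fun S : Finset (Fin n) => i < cnt S m).filter
        fun S => S.filter (fun s : Fin n => m ≤ (s:ℕ)) = t) = 2 ^ m := by
    intro t ht
    rw [mem_filter, mem_powerset] at ht
    have hsubs : ∀ x ∈ t, m ≤ (x:ℕ) := fun x hx => (mem_filter.1 (ht.1 hx)).2
    rw [filter_filter]
    have he : (univ.filter fun S : Finset (Fin n) =>
          i < cnt S m ∧ S.filter (fun s : Fin n => m ≤ (s:ℕ)) = t)
        = univ.filter fun S : Finset (Fin n) => S.filter (fun s : Fin n => m ≤ (s:ℕ)) = t := by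
      apply filter_congr
      intro S _
      constructor
      · exact fun h => h.2
      · intro h
        refine ⟨?_, h⟩
        show i < #(S.filter fun s : Fin n => m ≤ (s:ℕ))
        rw [h]
        exact ht.2
    rw [he, count_filter_eq m hm t hsubs]
  rw [sum_congr rfl hterm, sum_const, smul_eq_mul, card_powerset_filter, hU, mul_comm]


section Glue
open Finset
open scoped Classical

variable {n : ℕ}

lemma card_lowerSet : Fintype.card (LowerSet (Staircase n)) = 2 ^ n := by
  rw [← Fintype.card_of_bijective (idl_bij (n := n)), Fintype.card_finset, Fintype.card_fin]

noncomputable def cA (x : Staircase n) : ℕ :=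
  #(univ.filter fun A : LowerSet (Staircase n) => x ∈ A)

noncomputable def cB (x : Staircase n) : ℕ :=
  #(univ.filter fun A : LowerSet (Staircase n) => x ∉ A)

lemma cA_eq (x : Staircase n) :
    cA x = 2 ^ ((x.1.2:ℕ) - (x.1.1:ℕ)) * T (n - ((x.1.2:ℕ) - (x.1.1:ℕ))) (x.1.1:ℕ) := by
  have h1 : #(univ.filter fun S : Finset (Fin n) => x ∈ idl S) = cA x := by
    apply card_bij (fun S _ => idl S)
    · intro S hS
      exact mem_filter.2 ⟨mem_univ _, (mem_filter.1 hS).2⟩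
    · intro S1 _ S2 _ h
      exact idl_inj h
    · intro A hA
      refine ⟨Sof A, mem_filter.2 ⟨mem_univ _, ?_⟩, idl_Sof A⟩
      rw [idl_Sof]
      exact (mem_filter.1 hA).2
  rw [← h1]
  have hm : ((x.1.2:ℕ) - (x.1.1:ℕ)) ≤ n := by
    have := (x.1.2).isLt
    omega
  have h2 : (univ.filter fun S : Finset (Fin n) => x ∈ idl S)
      = univ.filter fun S : Finset (Fin n) =>
          (x.1.1:ℕ) < cnt S ((x.1.2:ℕ) - (x.1.1:ℕ)) := by
    apply filter_congr
    intro S _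
    exact mem_idl
  rw [h2]
  exact count_cnt ((x.1.2:ℕ) - (x.1.1:ℕ)) (x.1.1:ℕ) hm

lemma cB_eq (x : Staircase n) :
    cB x = 2 ^ ((x.1.2:ℕ) - (x.1.1:ℕ)) * D (n - ((x.1.2:ℕ) - (x.1.1:ℕ))) (x.1.1:ℕ) := by
  set m := (x.1.2:ℕ) - (x.1.1:ℕ) with hmdef
  have hmn : m ≤ n := by
    have := (x.1.2).isLt
    omega
  have hsum := card_filter_add_card_filter_not
    (s := (univ : Finset (LowerSet (Staircase n)))) (p := fun A => x ∈ A)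
  have hcA := cA_eq x
  have hN : #(univ : Finset (LowerSet (Staircase n))) = 2 ^ n := by
    rw [card_univ, card_lowerSet]
  have hTD := T_add_D (n - m) ((x.1.1:ℕ))
  have hpow : (2:ℕ) ^ m * 2 ^ (n - m) = 2 ^ n := by
    rw [← pow_add]
    congr 1
    omega
  have hkey : 2 ^ m * T (n - m) ((x.1.1:ℕ)) + 2 ^ m * D (n - m) ((x.1.1:ℕ)) = 2 ^ n := by
    rw [← Nat.mul_add, hTD, hpow]
  have hcA' : cA x = 2 ^ m * T (n - m) ((x.1.1:ℕ)) := hcA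
  have hAB : cA x + cB x = 2 ^ n := by
    rw [cA, cB] at *
    omega
  omega

lemma sum_sdc :
    ∑ A : LowerSet (Staircase n), ∑ B : LowerSet (Staircase n), sdc A B
      = ∑ x : Staircase n, 2 * (cA x * cB x) := by
  have hsd : ∀ A B : LowerSet (Staircase n), sdc A B
      = ∑ x : Staircase n, (if (x ∈ A ∧ x ∉ B) ∨ (x ∈ B ∧ x ∉ A) then 1 else 0) :=
    fun A B => card_filter _ _
  calc ∑ A : LowerSet (Staircase n), ∑ B : LowerSet (Staircase n), sdc A B
      = ∑ A : LowerSet (Staircase n), ∑ B : LowerSet (Staircase n), ∑ x : Staircase n,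
          (if (x ∈ A ∧ x ∉ B) ∨ (x ∈ B ∧ x ∉ A) then 1 else 0) :=
        sum_congr rfl fun A _ => sum_congr rfl fun B _ => hsd A B
    _ = ∑ A : LowerSet (Staircase n), ∑ x : Staircase n, ∑ B : LowerSet (Staircase n),
          (if (x ∈ A ∧ x ∉ B) ∨ (x ∈ B ∧ x ∉ A) then 1 else 0) :=
        sum_congr rfl fun A _ => Finset.sum_comm
    _ = ∑ x : Staircase n, ∑ A : LowerSet (Staircase n), ∑ B : LowerSet (Staircase n),
          (if (x ∈ A ∧ x ∉ B) ∨ (x ∈ B ∧ x ∉ A) then 1 else 0) := Finset.sum_comm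
    _ = ∑ x : Staircase n, 2 * (cA x * cB x) := by
        refine sum_congr rfl fun x _ => ?_
        have e1 : ∀ A B : LowerSet (Staircase n),
            (if (x ∈ A ∧ x ∉ B) ∨ (x ∈ B ∧ x ∉ A) then (1:ℕ) else 0)
            = (if x ∈ A then (1:ℕ) else 0) * (if x ∉ B then (1:ℕ) else 0)
              + (if x ∈ B then (1:ℕ) else 0) * (if x ∉ A then (1:ℕ) else 0) := by
          intro A B
          by_cases h1 : x ∈ A <;> by_cases h2 : x ∈ B <;> simp [h1, h2]
        have hA1 : ∑ A : LowerSet (Staircase n), (if x ∈ A then (1:ℕ) else 0) = cA x :=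
          (card_filter _ _).symm
        have hA2 : ∑ A : LowerSet (Staircase n), (if x ∉ A then (1:ℕ) else 0) = cB x :=
          (card_filter _ _).symm
        calc ∑ A : LowerSet (Staircase n), ∑ B : LowerSet (Staircase n),
              (if (x ∈ A ∧ x ∉ B) ∨ (x ∈ B ∧ x ∉ A) then (1:ℕ) else 0)
            = ∑ A : LowerSet (Staircase n), ∑ B : LowerSet (Staircase n),
              ((if x ∈ A then (1:ℕ) else 0) * (if x ∉ B then (1:ℕ) else 0)
                + (if x ∈ B then (1:ℕ) else 0) * (if x ∉ A then (1:ℕ) else 0)) :=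
              sum_congr rfl fun A _ => sum_congr rfl fun B _ => e1 A B
          _ = (∑ A : LowerSet (Staircase n), ∑ B : LowerSet (Staircase n),
                (if x ∈ A then (1:ℕ) else 0) * (if x ∉ B then (1:ℕ) else 0))
              + ∑ A : LowerSet (Staircase n), ∑ B : LowerSet (Staircase n),
                (if x ∈ B then (1:ℕ) else 0) * (if x ∉ A then (1:ℕ) else 0) := by
              rw [← sum_add_distrib]
              exact sum_congr rfl fun A _ => sum_add_distrib
          _ = cA x * cB x + cB x * cA x := by
              congr 1
              · rw [← sum_mul_sum, hA1, hA2]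
              · calc ∑ A : LowerSet (Staircase n), ∑ B : LowerSet (Staircase n),
                    (if x ∈ B then (1:ℕ) else 0) * (if x ∉ A then (1:ℕ) else 0)
                    = ∑ A : LowerSet (Staircase n),
                        (if x ∉ A then (1:ℕ) else 0) * ∑ B : LowerSet (Staircase n),
                          (if x ∈ B then (1:ℕ) else 0) := by
                      refine sum_congr rfl fun A _ => ?_
                      rw [mul_sum]
                      exact sum_congr rfl fun B _ => mul_comm _ _
                  _ = cB x * cA x := by
                      rw [← sum_mul, hA1, hA2]
          _ = 2 * (cA x * cB x) := by ring

lemma sum_transfer :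
    ∑ x : Staircase n, 2 * (cA x * cB x) = 2 * Wf n := by
  calc ∑ x : Staircase n, 2 * (cA x * cB x)
      = ∑ σ ∈ (range n).sigma (fun m => range (n - m)),
          2 * ((2 ^ σ.1 * T (n - σ.1) σ.2) * (2 ^ σ.1 * D (n - σ.1) σ.2)) := by
        refine sum_bij'
          (fun (x : Staircase n) _ =>
            (⟨(x.1.2:ℕ) - (x.1.1:ℕ), (x.1.1:ℕ)⟩ : (_ : ℕ) × ℕ))
          (fun σ hσ =>
            (⟨(⟨σ.2, by
                have h := mem_sigma.1 hσ
                have h1 := mem_range.1 h.1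
                have h2 := mem_range.1 h.2
                omega⟩,
              ⟨σ.2 + σ.1, by
                have h := mem_sigma.1 hσ
                have h1 := mem_range.1 h.1
                have h2 := mem_range.1 h.2
                omega⟩), by
                rw [Fin.le_def]
                exact Nat.le_add_right _ _⟩ : Staircase n))
          ?_ ?_ ?_ ?_ ?_
        · intro x _
          have h1 := stair_prop x
          have h2 := (x.1.2).isLt
          refine mem_sigma.2 ⟨mem_range.2 ?_, mem_range.2 ?_⟩
          · show (x.1.2:ℕ) - (x.1.1:ℕ) < n
            omega
          · show (x.1.1:ℕ) < n - ((x.1.2:ℕ) - (x.1.1:ℕ))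
            omega
        · intro σ _
          exact mem_univ _
        · intro x _
          apply Subtype.ext
          apply Prod.ext
          · exact Fin.ext rfl
          · apply Fin.ext
            show (x.1.1:ℕ) + ((x.1.2:ℕ) - (x.1.1:ℕ)) = (x.1.2:ℕ)
            have := stair_prop x
            omega
        · intro σ hσ
          obtain ⟨m, i⟩ := σ
          show (⟨(i + m) - i, i⟩ : (_ : ℕ) × ℕ) = ⟨m, i⟩
          rw [Nat.add_sub_cancel_left]
        · intro x _
          rw [cA_eq, cB_eq]
    _ = ∑ m ∈ range n, ∑ i ∈ range (n - m),
          2 * ((2 ^ m * T (n - m) i) * (2 ^ m * D (n - m) i)) := by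
        rw [sum_sigma]
    _ = ∑ m ∈ range n, 2 * (4 ^ m * V (n - m)) := by
        refine sum_congr rfl fun m _ => ?_
        have h4 : (4:ℕ) ^ m = 2 ^ m * 2 ^ m := by
          rw [show (4:ℕ) = 2 * 2 by norm_num, mul_pow]
        rw [V, mul_sum, mul_sum]
        refine sum_congr rfl fun i _ => ?_
        rw [h4]
        ring
    _ = 2 * Wf n := by
        rw [Wf, mul_sum]

lemma wienerIndex_eq : wienerIndex (LowerSet (Staircase n)) = 2 * Wf n := by
  have h1 : wienerIndex (LowerSet (Staircase n))
      = ∑ A : LowerSet (Staircase n), ∑ B : LowerSet (Staircase n),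
          (hasseGraph (LowerSet (Staircase n))).dist A B := by
    rw [wienerIndex, finsum_eq_sum_of_fintype]
    exact sum_congr rfl fun A _ => finsum_eq_sum_of_fintype _
  rw [h1]
  rw [sum_congr rfl fun A _ => sum_congr rfl fun B _ => dist_eq A B]
  rw [sum_sdc, sum_transfer]

end Glue

end WS

/-- Wiener index of the lattice of lower sets of the shifted staircase. -/
theorem wiener_staircase (n : ℕ) (hn : 0 < n) :
    3 * wienerIndex (LowerSet (Staircase n))
      = 2 * n * (2 * n + 1) * Nat.choose (2 * n - 1) n := by
  rw [WS.wienerIndex_eq]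
  rw [show 3 * (2 * WS.Wf n) = 6 * WS.Wf n by ring]
  exact WS.main_arith n
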